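/- Let A be a ring with property (SF) which satisfies the strong rank condition, and let Q be a k×m matrix over A. Let R_max be a right A-submodule of A^k such that the extension R_Q ≤ R_max is algebraic and R_max is a free factor of A^k, and let L_max be a left A-submodule of A^m such that the extension L_Q ≤ L_max is algebraic and L_max is a free factor of A^m. Then rank(R_Q) = rank(L_max) and rank(L_Q) = rank(R_max), where all four modules are free A-modules and rank denotes the cardinality of a basis. -/

import Mathlib

universe u v

/-- Property (SF): every submodule of every free `A`-module is a free `A`-module. -/
def HasSF (A : Type u) [Ring A] : Prop :=
  ∀ (M : Type v) [AddCommGroup M] [Module A M], Module.Free A M →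
    ∀ N : Submodule A M, Module.Free A ↥N

/-- `M` is a free factor of `N` (written `M ≤* N`): `M ≤ N` and there is a submodule
`M' ≤ N` with `M ⊓ M' = ⊥` and `M ⊔ M' = N` such that `M'` is a free module. -/
def IsFreeFactor {A : Type*} [Ring A] {P : Type*} [AddCommGroup P] [Module A P]
    (M N : Submodule A P) : Prop :=
  M ≤ N ∧ ∃ M' : Submodule A P, M' ≤ N ∧ M ⊓ M' = ⊥ ∧ M ⊔ M' = N ∧ Module.Free A ↥M'

/-- The extension `M ≤ N` is algebraic: the only submodule `L` with `M ≤ L ≤ N`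
which is a free factor of `N` is `L = N`. -/
def IsAlgExt {A : Type*} [Ring A] {P : Type*} [AddCommGroup P] [Module A P]
    (M N : Submodule A P) : Prop :=
  M ≤ N ∧ ∀ L : Submodule A P, M ≤ L → IsFreeFactor L N → L = N

/-- The column space of a matrix `Q`: the right `A`-submodule (i.e. `Aᵐᵒᵖ`-submodule)
of `A^k` generated by the columns of `Q`. -/
def colSpace {A : Type u} [Ring A] {k m : ℕ} (Q : Matrix (Fin k) (Fin m) A) :
    Submodule Aᵐᵒᵖ (Fin k → A) :=
  Submodule.span Aᵐᵒᵖ (Set.range fun j => fun i => Q i j)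

/-- The row space of a matrix `Q`: the left `A`-submodule of `A^m` generated by the
rows of `Q`. -/
def rowSpace {A : Type u} [Ring A] {k m : ℕ} (Q : Matrix (Fin k) (Fin m) A) :
    Submodule A (Fin m → A) :=
  Submodule.span A (Set.range fun i => fun j => Q i j)

set_option maxHeartbeats 1000000

open MulOpposite

noncomputable def opSelfBasis (A : Type u) [Ring A] : Module.Basis Unit Aᵐᵒᵖ A :=
  Module.Basis.ofRepr
  { toFun := fun a => Finsupp.single () (op a)
    map_add' := fun x y => by simp [Finsupp.single_add]
    map_smul' := fun r x => by
      show Finsupp.single () (op (r • x)) = r • Finsupp.single () (op x)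
      rw [Finsupp.smul_single]
      congr 1
    invFun := fun f => (f ()).unop
    left_inv := fun a => by simp
    right_inv := fun f => by
      show Finsupp.single () (op ((f ()).unop)) = f
      rw [op_unop]
      exact (Finsupp.unique_single f).symm }

instance freeOpSelf (A : Type u) [Ring A] : Module.Free Aᵐᵒᵖ A :=
  Module.Free.of_basis (opSelfBasis A)

theorem core_left {A : Type u} [Ring A]
    [StrongRankCondition A] [StrongRankCondition Aᵐᵒᵖ]
    (hSF : HasSF.{u, u} A) (hSFop : HasSF.{u, u} Aᵐᵒᵖ)
    {k m : ℕ} (Q : Matrix (Fin k) (Fin m) A)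
    (Lmax : Submodule A (Fin m → A))
    (hLalg : IsAlgExt (rowSpace Q) Lmax) (hLff : IsFreeFactor Lmax ⊤) :
    Module.rank Aᵐᵒᵖ ↥(colSpace Q) = Module.rank A ↥Lmax := by
  classical
  haveI hfreeL : Module.Free A ↥Lmax := hSF (Fin m → A) inferInstance Lmax
  haveI hfreeC : Module.Free Aᵐᵒᵖ ↥(colSpace Q) :=
    hSFop (Fin k → A) inferInstance (colSpace Q)
  haveI : Module.Finite Aᵐᵒᵖ ↥(colSpace Q) :=
    Module.Finite.span_of_finite Aᵐᵒᵖ (Set.finite_range _)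
  let bL : Module.Basis (Module.Free.ChooseBasisIndex A ↥Lmax) A ↥Lmax :=
    Module.Free.chooseBasis A ↥Lmax
  let bC : Module.Basis (Module.Free.ChooseBasisIndex Aᵐᵒᵖ ↥(colSpace Q)) Aᵐᵒᵖ ↥(colSpace Q) :=
    Module.Free.chooseBasis Aᵐᵒᵖ ↥(colSpace Q)
  haveI : Fintype (Module.Free.ChooseBasisIndex A ↥Lmax) :=
    (Cardinal.lt_aleph0_iff_fintype.mp (by
      rw [bL.mk_eq_rank'']
      exact lt_of_le_of_lt (Submodule.rank_le Lmax)
        (Module.rank_lt_aleph0 A (Fin m → A)))).some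
  haveI : Fintype (Module.Free.ChooseBasisIndex Aᵐᵒᵖ ↥(colSpace Q)) :=
    (Cardinal.lt_aleph0_iff_fintype.mp (by
      rw [bC.mk_eq_rank'']
      exact Module.rank_lt_aleph0 Aᵐᵒᵖ ↥(colSpace Q))).some
  -- basis vectors of Lmax, as elements of the ambient space
  set w : Module.Free.ChooseBasisIndex A ↥Lmax → (Fin m → A) :=
    fun t => ((bL t : ↥Lmax) : Fin m → A) with hwdef
  have hw : ∀ t, w t ∈ Lmax := fun t => (bL t).2
  -- the rows of Q lie in Lmax
  have hrowmem : ∀ i, (fun j => Q i j) ∈ Lmax := fun i =>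
    hLalg.1 (Submodule.subset_span ⟨i, rfl⟩)
  -- coefficients of the rows in the basis of Lmax
  set q₁ : Fin k → Module.Free.ChooseBasisIndex A ↥Lmax → A :=
    fun i t => bL.repr ⟨fun j => Q i j, hrowmem i⟩ t with hq₁def
  have hq₁ : ∀ i, ∑ t, q₁ i t • w t = fun j => Q i j := by
    intro i
    have h := congrArg (Subtype.val) (bL.sum_repr ⟨fun j => Q i j, hrowmem i⟩)
    rw [Submodule.coe_sum] at h
    exact h
  have hq₁p : ∀ i j, ∑ t, q₁ i t * w t j = Q i j := by
    intro i j
    have h := congrFun (hq₁ i) j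
    simpa using h
  -- projection onto Lmax coming from the free-factor hypothesis
  obtain ⟨-, Cc, -, hinf, hsup, hCfree⟩ := hLff
  have hcompl : IsCompl Lmax Cc := ⟨disjoint_iff.mpr hinf, codisjoint_iff.mpr hsup⟩
  set π : (Fin m → A) →ₗ[A] ↥Lmax := Submodule.linearProjOfIsCompl Lmax Cc hcompl with hπdef
  set φ : Module.Free.ChooseBasisIndex A ↥Lmax → ((Fin m → A) →ₗ[A] A) :=
    fun t => (bL.coord t).comp π with hφdef
  have hφw : ∀ t u', φ t (w u') = if u' = t then 1 else 0 := by
    intro t u'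
    have h1 : π (w u') = bL u' := Submodule.linearProjOfIsCompl_apply_left hcompl (bL u')
    show bL.coord t (π (w u')) = _
    rw [h1, Module.Basis.coord_apply, Module.Basis.repr_self, Finsupp.single_apply]
  have hφrow : ∀ t i, φ t (fun j => Q i j) = q₁ i t := by
    intro t i
    rw [← hq₁ i, map_sum]
    simp [hφw, mul_ite, Finset.sum_ite_eq']
  -- the coefficient columns
  set c₁ : Module.Free.ChooseBasisIndex A ↥Lmax → (Fin k → A) :=
    fun t i => q₁ i t with hc₁def
  have hle1 : colSpace Q ≤ Submodule.span Aᵐᵒᵖ (Set.range c₁) := by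
    refine Submodule.span_le.mpr ?_
    rintro x ⟨j, rfl⟩
    show (fun i => Q i j) ∈ Submodule.span Aᵐᵒᵖ (Set.range c₁)
    have hxe : (fun i => Q i j) = ∑ t, op (w t j) • c₁ t := by
      funext i
      rw [Finset.sum_apply]
      simp only [Pi.smul_apply, op_smul_eq_mul, hc₁def]
      exact (hq₁p i j).symm
    rw [hxe]
    exact Submodule.sum_mem _ fun t _ =>
      Submodule.smul_mem _ _ (Submodule.subset_span ⟨t, rfl⟩)
  set sm : Fin m → (Fin m → A) := fun j => Pi.single j (1:A) with hsmdef
  have hsmapp : ∀ j j', sm j j' = if j' = j then 1 else 0 := by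
    intro j j'
    rw [hsmdef]
    simp [Pi.single_apply]
  have hsingle : ∀ i, ∑ j, Q i j • sm j = fun j => Q i j := by
    intro i
    funext j'
    rw [Finset.sum_apply]
    simp [hsmapp, Finset.sum_ite_eq]
  have hle2 : Submodule.span Aᵐᵒᵖ (Set.range c₁) ≤ colSpace Q := by
    refine Submodule.span_le.mpr ?_
    rintro x ⟨t, rfl⟩
    show c₁ t ∈ colSpace Q
    have hxe : c₁ t = ∑ j, op (φ t (sm j)) • (fun i => Q i j) := by
      funext i
      rw [Finset.sum_apply]
      simp only [Pi.smul_apply, op_smul_eq_mul]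
      have h2 : ∑ j, Q i j * φ t (sm j) = φ t (fun j => Q i j) := by
        rw [← hsingle i, map_sum]
        simp
      rw [h2, hφrow]
    rw [hxe]
    exact Submodule.sum_mem _ fun j _ =>
      Submodule.smul_mem _ _ (Submodule.subset_span ⟨j, rfl⟩)
  have hc₁mem : ∀ t, c₁ t ∈ colSpace Q := fun t =>
    hle2 (Submodule.subset_span ⟨t, rfl⟩)
  set c₁' : Module.Free.ChooseBasisIndex A ↥Lmax → ↥(colSpace Q) :=
    fun t => ⟨c₁ t, hc₁mem t⟩ with hc₁'def
  set b : Module.Free.ChooseBasisIndex Aᵐᵒᵖ ↥(colSpace Q) → (Fin k → A) :=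
    fun e => ((bC e : ↥(colSpace Q)) : Fin k → A) with hbdef
  set d' : Module.Free.ChooseBasisIndex Aᵐᵒᵖ ↥(colSpace Q) →
      Module.Free.ChooseBasisIndex A ↥Lmax → Aᵐᵒᵖ :=
    fun e t => bC.repr (c₁' t) e with hd'def
  have hdecomp : ∀ t, c₁ t = ∑ e, d' e t • b e := by
    intro t
    have h := congrArg (Subtype.val) (bC.sum_repr (c₁' t))
    rw [Submodule.coe_sum] at h
    exact h.symm
  have hd : ∀ t i, q₁ i t = ∑ e, b e i * (d' e t).unop := by
    intro t i
    have h2 := congrFun (hdecomp t) i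
    rw [Finset.sum_apply] at h2
    simpa [MulOpposite.smul_eq_mul_unop] using h2
  -- spanning property of the c₁' in the subtype
  have hspan' : ∀ x : ↥(colSpace Q), ∃ a : Module.Free.ChooseBasisIndex A ↥Lmax → Aᵐᵒᵖ, ∑ t, a t • c₁' t = x := by
    intro x
    have hx : (x : Fin k → A) ∈ Submodule.span Aᵐᵒᵖ (Set.range c₁) := hle1 x.2
    obtain ⟨a, ha⟩ := (Submodule.mem_span_range_iff_exists_fun Aᵐᵒᵖ).mp hx
    refine ⟨a, Subtype.ext ?_⟩
    rw [Submodule.coe_sum]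
    exact ha
  choose a ha using fun e₀ => hspan' (bC e₀)
  have hsumrepr : ∀ t, ∑ e, d' e t • bC e = c₁' t := fun t => bC.sum_repr (c₁' t)
  have hkey : ∀ e₀ e', ∑ t, a e₀ t * d' e' t = if e₀ = e' then 1 else 0 := by
    intro e₀ e'
    have h1 : ∑ e, (∑ t, a e₀ t * d' e t) • bC e
        = ∑ e, (if e₀ = e then (1:Aᵐᵒᵖ) else 0) • bC e := by
      have lhs : ∑ e, (∑ t, a e₀ t * d' e t) • bC e = ∑ t, a e₀ t • c₁' t := by
        calc ∑ e, (∑ t, a e₀ t * d' e t) • bC e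
            = ∑ e, ∑ t, (a e₀ t * d' e t) • bC e := by
              simp [Finset.sum_smul]
          _ = ∑ t, ∑ e, (a e₀ t * d' e t) • bC e := Finset.sum_comm
          _ = ∑ t, a e₀ t • ∑ e, d' e t • bC e := by
              simp [Finset.smul_sum, mul_smul]
          _ = ∑ t, a e₀ t • c₁' t := by
              simp_rw [hsumrepr]
      have rhs : ∑ e, (if e₀ = e then (1:Aᵐᵒᵖ) else 0) • bC e = bC e₀ := by
        simp [ite_smul, Finset.sum_ite_eq]
      rw [lhs, rhs, ha e₀]
    have h3 : ∀ e, ((∑ t, a e₀ t * d' e t) - (if e₀ = e then 1 else 0)) = 0 := by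
      apply Fintype.linearIndependent_iff.mp bC.linearIndependent
      simp only [sub_smul]
      rw [Finset.sum_sub_distrib, h1, sub_self]
    exact sub_eq_zero.mp (h3 e')
  have hkeyA : ∀ e e', ∑ t, (d' e' t).unop * (a e t).unop = if e = e' then 1 else 0 := by
    intro e e'
    have h := congrArg unop (hkey e e')
    simpa [apply_ite] using h
  -- the generators of the would-be closure
  set u : Module.Free.ChooseBasisIndex Aᵐᵒᵖ ↥(colSpace Q) → (Fin m → A) :=
    fun e => ∑ t, (d' e t).unop • w t with hudef
  have hu : ∀ e, u e ∈ Lmax := fun e =>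
    Submodule.sum_mem _ fun t _ => Submodule.smul_mem _ _ (hw t)
  set ψ : Module.Free.ChooseBasisIndex Aᵐᵒᵖ ↥(colSpace Q) → ((Fin m → A) →ₗ[A] A) :=
    fun e => ∑ t, (LinearMap.toSpanSingleton A A ((a e t).unop)).comp (φ t) with hψdef
  have hψ : ∀ e x, ψ e x = ∑ t, φ t x * (a e t).unop := by
    intro e x
    show (∑ t, (LinearMap.toSpanSingleton A A ((a e t).unop)).comp (φ t)) x = _
    rw [LinearMap.sum_apply]
    simp [LinearMap.toSpanSingleton_apply]
  have hφu : ∀ t e', φ t (u e') = (d' e' t).unop := by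
    intro t e'
    show φ t (∑ t', (d' e' t').unop • w t') = _
    rw [map_sum]
    simp [hφw, mul_ite, Finset.sum_ite_eq']
  have hψu : ∀ e e', ψ e (u e') = if e = e' then 1 else 0 := by
    intro e e'
    rw [hψ]
    simp_rw [hφu]
    exact hkeyA e e'
  set ρ : (Fin m → A) →ₗ[A] (Fin m → A) :=
    ∑ e, (LinearMap.toSpanSingleton A (Fin m → A) (u e)).comp (ψ e) with hρdef
  have hρ : ∀ x, ρ x = ∑ e, ψ e x • u e := by
    intro x
    show (∑ e, (LinearMap.toSpanSingleton A (Fin m → A) (u e)).comp (ψ e)) x = _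
    rw [LinearMap.sum_apply]
    simp [LinearMap.toSpanSingleton_apply]
  set N : Submodule A (Fin m → A) := Submodule.span A (Set.range u) with hNdef
  have hNle : N ≤ Lmax := Submodule.span_le.mpr (by rintro x ⟨e, rfl⟩; exact hu e)
  have huej : ∀ e j, u e j = ∑ t, (d' e t).unop * w t j := by
    intro e j
    show (∑ t, (d' e t).unop • w t) j = _
    rw [Finset.sum_apply]
    simp
  have hQN : rowSpace Q ≤ N := by
    refine Submodule.span_le.mpr ?_
    rintro x ⟨i, rfl⟩
    show (fun j => Q i j) ∈ N
    have hxe : (fun j => Q i j) = ∑ e, b e i • u e := by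
      funext j
      rw [Finset.sum_apply]
      simp only [Pi.smul_apply, smul_eq_mul]
      calc Q i j = ∑ t, q₁ i t * w t j := (hq₁p i j).symm
        _ = ∑ t, (∑ e, b e i * (d' e t).unop) * w t j := by
            simp_rw [← hd]
        _ = ∑ t, ∑ e, b e i * (d' e t).unop * w t j := by
            simp only [Finset.sum_mul]
        _ = ∑ e, ∑ t, b e i * (d' e t).unop * w t j := by
            rw [Finset.sum_comm]
        _ = ∑ e, b e i * u e j := by
            refine Finset.sum_congr rfl fun e _ => ?_
            rw [huej, Finset.mul_sum]
            simp only [mul_assoc]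
    rw [hxe]
    exact Submodule.sum_mem _ fun e _ =>
      Submodule.smul_mem _ _ (Submodule.subset_span ⟨e, rfl⟩)
  have hρmem : ∀ x, ρ x ∈ N := fun x => by
    rw [hρ]
    exact Submodule.sum_mem _ fun e _ =>
      Submodule.smul_mem _ _ (Submodule.subset_span ⟨e, rfl⟩)
  have hρN : ∀ x ∈ N, ρ x = x := by
    intro x hx
    obtain ⟨c, rfl⟩ := (Submodule.mem_span_range_iff_exists_fun A).mp hx
    rw [map_sum]
    have : ∀ e, ρ (c e • u e) = c e • u e := by
      intro e
      rw [map_smul, hρ]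
      simp [hψu, ite_smul, Finset.sum_ite_eq]
    simp_rw [this]
  -- the complement inside Lmax
  have hND : N ⊓ (LinearMap.ker ρ ⊓ Lmax) = ⊥ := by
    rw [eq_bot_iff]
    rintro x ⟨hxN, hxk, -⟩
    have h2 : ρ x = 0 := hxk
    have h3 : x = 0 := by rw [← hρN x hxN, h2]
    simp [h3]
  have hNsup : N ⊔ (LinearMap.ker ρ ⊓ Lmax) = Lmax := by
    apply le_antisymm (sup_le hNle inf_le_right)
    intro x hx
    have h1 : x - ρ x ∈ LinearMap.ker ρ ⊓ Lmax := by
      refine ⟨?_, Submodule.sub_mem _ hx (hNle (hρmem x))⟩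
      show ρ (x - ρ x) = 0
      rw [map_sub, hρN (ρ x) (hρmem x), sub_self]
    have h2 : x = ρ x + (x - ρ x) := by abel
    rw [h2]
    exact Submodule.add_mem_sup (hρmem x) h1
  haveI hC2free : Module.Free A ↥(LinearMap.ker ρ ⊓ Lmax) :=
    hSF (Fin m → A) inferInstance _
  have hNL : N = Lmax :=
    hLalg.2 N hQN ⟨hNle, LinearMap.ker ρ ⊓ Lmax, inf_le_right, hND, hNsup, hC2free⟩
  -- u is linearly independent, so N is free of rank κ
  have hliu : LinearIndependent A u := by
    apply Fintype.linearIndependent_iff.mpr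
    intro g hg e
    have h2 : ψ e (∑ e', g e' • u e') = g e := by
      rw [map_sum]
      simp [hψu, mul_ite, Finset.sum_ite_eq]
    rw [hg, map_zero] at h2
    exact h2.symm
  have bN : Module.Basis (Module.Free.ChooseBasisIndex Aᵐᵒᵖ ↥(colSpace Q)) A
      ↥(Submodule.span A (Set.range u)) := Module.Basis.span hliu
  calc Module.rank Aᵐᵒᵖ ↥(colSpace Q)
      = Cardinal.mk (Module.Free.ChooseBasisIndex Aᵐᵒᵖ ↥(colSpace Q)) := bC.mk_eq_rank''.symm
    _ = Module.rank A ↥(Submodule.span A (Set.range u)) := bN.mk_eq_rank''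
    _ = Module.rank A ↥Lmax := by rw [← hNdef, hNL]
theorem core_right {A : Type u} [Ring A]
    [StrongRankCondition A] [StrongRankCondition Aᵐᵒᵖ]
    (hSF : HasSF.{u, u} A) (hSFop : HasSF.{u, u} Aᵐᵒᵖ)
    {k m : ℕ} (Q : Matrix (Fin k) (Fin m) A)
    (Rmax : Submodule Aᵐᵒᵖ (Fin k → A))
    (hRalg : IsAlgExt (colSpace Q) Rmax) (hRff : IsFreeFactor Rmax ⊤) :
    Module.rank A ↥(rowSpace Q) = Module.rank Aᵐᵒᵖ ↥Rmax := by
  classical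
  haveI hfreeR : Module.Free Aᵐᵒᵖ ↥Rmax := hSFop (Fin k → A) inferInstance Rmax
  haveI hfreeRow : Module.Free A ↥(rowSpace Q) := hSF (Fin m → A) inferInstance (rowSpace Q)
  haveI : Module.Finite A ↥(rowSpace Q) :=
    Module.Finite.span_of_finite A (Set.finite_range _)
  haveI : Module.Finite Aᵐᵒᵖ A := Module.Finite.of_basis (opSelfBasis A)
  let bL : Module.Basis (Module.Free.ChooseBasisIndex Aᵐᵒᵖ ↥Rmax) Aᵐᵒᵖ ↥Rmax :=
    Module.Free.chooseBasis Aᵐᵒᵖ ↥Rmax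
  let bR : Module.Basis (Module.Free.ChooseBasisIndex A ↥(rowSpace Q)) A ↥(rowSpace Q) :=
    Module.Free.chooseBasis A ↥(rowSpace Q)
  haveI : Fintype (Module.Free.ChooseBasisIndex Aᵐᵒᵖ ↥Rmax) :=
    (Cardinal.lt_aleph0_iff_fintype.mp (by
      rw [bL.mk_eq_rank'']
      exact lt_of_le_of_lt (Submodule.rank_le Rmax)
        (Module.rank_lt_aleph0 Aᵐᵒᵖ (Fin k → A)))).some
  haveI : Fintype (Module.Free.ChooseBasisIndex A ↥(rowSpace Q)) :=
    (Cardinal.lt_aleph0_iff_fintype.mp (by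
      rw [bR.mk_eq_rank'']
      exact Module.rank_lt_aleph0 A ↥(rowSpace Q))).some
  set w : Module.Free.ChooseBasisIndex Aᵐᵒᵖ ↥Rmax → (Fin k → A) :=
    fun t => ((bL t : ↥Rmax) : Fin k → A) with hwdef
  have hw : ∀ t, w t ∈ Rmax := fun t => (bL t).2
  have hcolmem : ∀ j, (fun i => Q i j) ∈ Rmax := fun j =>
    hRalg.1 (Submodule.subset_span ⟨j, rfl⟩)
  set q₁ : Fin m → Module.Free.ChooseBasisIndex Aᵐᵒᵖ ↥Rmax → Aᵐᵒᵖ :=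
    fun j t => bL.repr ⟨fun i => Q i j, hcolmem j⟩ t with hq₁def
  have hq₁ : ∀ j, ∑ t, q₁ j t • w t = fun i => Q i j := by
    intro j
    have h := congrArg (Subtype.val) (bL.sum_repr ⟨fun i => Q i j, hcolmem j⟩)
    rw [Submodule.coe_sum] at h
    exact h
  have hq₁p : ∀ j i, ∑ t, w t i * (q₁ j t).unop = Q i j := by
    intro j i
    have h := congrFun (hq₁ j) i
    rw [Finset.sum_apply] at h
    simpa [MulOpposite.smul_eq_mul_unop] using h
  obtain ⟨-, Cc, -, hinf, hsup, hCfree⟩ := hRff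
  have hcompl : IsCompl Rmax Cc := ⟨disjoint_iff.mpr hinf, codisjoint_iff.mpr hsup⟩
  set π : (Fin k → A) →ₗ[Aᵐᵒᵖ] ↥Rmax := Submodule.linearProjOfIsCompl Rmax Cc hcompl with hπdef
  set φ : Module.Free.ChooseBasisIndex Aᵐᵒᵖ ↥Rmax → ((Fin k → A) →ₗ[Aᵐᵒᵖ] Aᵐᵒᵖ) :=
    fun t => (bL.coord t).comp π with hφdef
  have hφw : ∀ t u', φ t (w u') = if u' = t then 1 else 0 := by
    intro t u'
    have h1 : π (w u') = bL u' := Submodule.linearProjOfIsCompl_apply_left hcompl (bL u')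
    show bL.coord t (π (w u')) = _
    rw [h1, Module.Basis.coord_apply, Module.Basis.repr_self, Finsupp.single_apply]
  have hφcol : ∀ t j, φ t (fun i => Q i j) = q₁ j t := by
    intro t j
    rw [← hq₁ j, map_sum]
    simp [hφw, mul_ite, Finset.sum_ite_eq']
  set r₁ : Module.Free.ChooseBasisIndex Aᵐᵒᵖ ↥Rmax → (Fin m → A) :=
    fun t j => (q₁ j t).unop with hr₁def
  set sk : Fin k → (Fin k → A) := fun i => Pi.single i (1:A) with hskdef
  have hskapp : ∀ i i', sk i i' = if i' = i then 1 else 0 := by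
    intro i i'
    rw [hskdef]
    simp [Pi.single_apply]
  have hsingle : ∀ j, ∑ i, op (Q i j) • sk i = fun i => Q i j := by
    intro j
    funext i'
    rw [Finset.sum_apply]
    simp [hskapp, op_smul_eq_mul, ite_mul, Finset.sum_ite_eq]
  have hle1 : rowSpace Q ≤ Submodule.span A (Set.range r₁) := by
    refine Submodule.span_le.mpr ?_
    rintro x ⟨i, rfl⟩
    show (fun j => Q i j) ∈ Submodule.span A (Set.range r₁)
    have hxe : (fun j => Q i j) = ∑ t, w t i • r₁ t := by
      funext j
      rw [Finset.sum_apply]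
      simp only [Pi.smul_apply, smul_eq_mul]
      exact (hq₁p j i).symm
    rw [hxe]
    exact Submodule.sum_mem _ fun t _ =>
      Submodule.smul_mem _ _ (Submodule.subset_span ⟨t, rfl⟩)
  have hle2 : Submodule.span A (Set.range r₁) ≤ rowSpace Q := by
    refine Submodule.span_le.mpr ?_
    rintro x ⟨t, rfl⟩
    show r₁ t ∈ rowSpace Q
    have hxe : r₁ t = ∑ i, (φ t (sk i)).unop • (fun j => Q i j) := by
      funext j
      rw [Finset.sum_apply]
      simp only [Pi.smul_apply, smul_eq_mul]
      have h2 : ∑ i, op (Q i j) * φ t (sk i) = φ t (fun i => Q i j) := by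
        rw [← hsingle j, map_sum]
        simp
      rw [hφcol] at h2
      have h3 := congrArg unop h2
      simpa using h3.symm
    rw [hxe]
    exact Submodule.sum_mem _ fun i _ =>
      Submodule.smul_mem _ _ (Submodule.subset_span ⟨i, rfl⟩)
  have hr₁mem : ∀ t, r₁ t ∈ rowSpace Q := fun t =>
    hle2 (Submodule.subset_span ⟨t, rfl⟩)
  set r₁' : Module.Free.ChooseBasisIndex Aᵐᵒᵖ ↥Rmax → ↥(rowSpace Q) :=
    fun t => ⟨r₁ t, hr₁mem t⟩ with hr₁'def
  set b : Module.Free.ChooseBasisIndex A ↥(rowSpace Q) → (Fin m → A) :=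
    fun e => ((bR e : ↥(rowSpace Q)) : Fin m → A) with hbdef
  set d' : Module.Free.ChooseBasisIndex A ↥(rowSpace Q) →
      Module.Free.ChooseBasisIndex Aᵐᵒᵖ ↥Rmax → A :=
    fun e t => bR.repr (r₁' t) e with hd'def
  have hdecomp : ∀ t, r₁ t = ∑ e, d' e t • b e := by
    intro t
    have h := congrArg (Subtype.val) (bR.sum_repr (r₁' t))
    rw [Submodule.coe_sum] at h
    exact h.symm
  have hd : ∀ t j, (q₁ j t).unop = ∑ e, d' e t * b e j := by
    intro t j
    have h2 := congrFun (hdecomp t) j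
    rw [Finset.sum_apply] at h2
    simpa using h2
  have hspan' : ∀ x : ↥(rowSpace Q),
      ∃ a : Module.Free.ChooseBasisIndex Aᵐᵒᵖ ↥Rmax → A, ∑ t, a t • r₁' t = x := by
    intro x
    have hx : (x : Fin m → A) ∈ Submodule.span A (Set.range r₁) := hle1 x.2
    obtain ⟨a, ha⟩ := (Submodule.mem_span_range_iff_exists_fun A).mp hx
    refine ⟨a, Subtype.ext ?_⟩
    rw [Submodule.coe_sum]
    exact ha
  choose a ha using fun e₀ => hspan' (bR e₀)
  have hsumrepr : ∀ t, ∑ e, d' e t • bR e = r₁' t := fun t => bR.sum_repr (r₁' t)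
  have hkey : ∀ e₀ e', ∑ t, a e₀ t * d' e' t = if e₀ = e' then 1 else 0 := by
    intro e₀ e'
    have h1 : ∑ e, (∑ t, a e₀ t * d' e t) • bR e
        = ∑ e, (if e₀ = e then (1:A) else 0) • bR e := by
      have lhs : ∑ e, (∑ t, a e₀ t * d' e t) • bR e = ∑ t, a e₀ t • r₁' t := by
        calc ∑ e, (∑ t, a e₀ t * d' e t) • bR e
            = ∑ e, ∑ t, (a e₀ t * d' e t) • bR e := by
              simp [Finset.sum_smul]
          _ = ∑ t, ∑ e, (a e₀ t * d' e t) • bR e := Finset.sum_comm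
          _ = ∑ t, a e₀ t • ∑ e, d' e t • bR e := by
              simp [Finset.smul_sum, mul_smul]
          _ = ∑ t, a e₀ t • r₁' t := by
              simp_rw [hsumrepr]
      have rhs : ∑ e, (if e₀ = e then (1:A) else 0) • bR e = bR e₀ := by
        simp [ite_smul, Finset.sum_ite_eq]
      rw [lhs, rhs, ha e₀]
    have h3 : ∀ e, ((∑ t, a e₀ t * d' e t) - (if e₀ = e then 1 else 0)) = 0 := by
      apply Fintype.linearIndependent_iff.mp bR.linearIndependent
      simp only [sub_smul]
      rw [Finset.sum_sub_distrib, h1, sub_self]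
    exact sub_eq_zero.mp (h3 e')
  set u : Module.Free.ChooseBasisIndex A ↥(rowSpace Q) → (Fin k → A) :=
    fun e => ∑ t, op (d' e t) • w t with hudef
  have hu : ∀ e, u e ∈ Rmax := fun e =>
    Submodule.sum_mem _ fun t _ => Submodule.smul_mem _ _ (hw t)
  set ψ : Module.Free.ChooseBasisIndex A ↥(rowSpace Q) → ((Fin k → A) →ₗ[Aᵐᵒᵖ] Aᵐᵒᵖ) :=
    fun e => ∑ t, (LinearMap.toSpanSingleton Aᵐᵒᵖ Aᵐᵒᵖ (op (a e t))).comp (φ t) with hψdef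
  have hψ : ∀ e x, ψ e x = ∑ t, φ t x * op (a e t) := by
    intro e x
    show (∑ t, (LinearMap.toSpanSingleton Aᵐᵒᵖ Aᵐᵒᵖ (op (a e t))).comp (φ t)) x = _
    rw [LinearMap.sum_apply]
    simp [LinearMap.toSpanSingleton_apply]
  have hφu : ∀ t e', φ t (u e') = op (d' e' t) := by
    intro t e'
    show φ t (∑ t', op (d' e' t') • w t') = _
    rw [map_sum]
    simp [hφw, mul_ite, Finset.sum_ite_eq']
  have hψu : ∀ e e', ψ e (u e') = if e = e' then 1 else 0 := by
    intro e e'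
    rw [hψ]
    simp_rw [hφu]
    have h := congrArg op (hkey e e')
    simpa [apply_ite] using h
  set ρ : (Fin k → A) →ₗ[Aᵐᵒᵖ] (Fin k → A) :=
    ∑ e, (LinearMap.toSpanSingleton Aᵐᵒᵖ (Fin k → A) (u e)).comp (ψ e) with hρdef
  have hρ : ∀ x, ρ x = ∑ e, ψ e x • u e := by
    intro x
    show (∑ e, (LinearMap.toSpanSingleton Aᵐᵒᵖ (Fin k → A) (u e)).comp (ψ e)) x = _
    rw [LinearMap.sum_apply]
    simp [LinearMap.toSpanSingleton_apply]
  set N : Submodule Aᵐᵒᵖ (Fin k → A) := Submodule.span Aᵐᵒᵖ (Set.range u) with hNdef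
  have hNle : N ≤ Rmax := Submodule.span_le.mpr (by rintro x ⟨e, rfl⟩; exact hu e)
  have huei : ∀ e i, u e i = ∑ t, w t i * d' e t := by
    intro e i
    show (∑ t, op (d' e t) • w t) i = _
    rw [Finset.sum_apply]
    simp [op_smul_eq_mul]
  have hQN : colSpace Q ≤ N := by
    refine Submodule.span_le.mpr ?_
    rintro x ⟨j, rfl⟩
    show (fun i => Q i j) ∈ N
    have hxe : (fun i => Q i j) = ∑ e, op (b e j) • u e := by
      funext i
      rw [Finset.sum_apply]
      simp only [Pi.smul_apply, op_smul_eq_mul]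
      calc Q i j = ∑ t, w t i * (q₁ j t).unop := (hq₁p j i).symm
        _ = ∑ t, w t i * (∑ e, d' e t * b e j) := by
            simp_rw [← hd]
        _ = ∑ t, ∑ e, w t i * (d' e t * b e j) := by
            simp only [Finset.mul_sum]
        _ = ∑ e, ∑ t, w t i * (d' e t * b e j) := by
            rw [Finset.sum_comm]
        _ = ∑ e, u e i * b e j := by
            refine Finset.sum_congr rfl fun e _ => ?_
            rw [huei, Finset.sum_mul]
            simp only [mul_assoc]
    rw [hxe]
    exact Submodule.sum_mem _ fun e _ =>
      Submodule.smul_mem _ _ (Submodule.subset_span ⟨e, rfl⟩)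
  have hρmem : ∀ x, ρ x ∈ N := fun x => by
    rw [hρ]
    exact Submodule.sum_mem _ fun e _ =>
      Submodule.smul_mem _ _ (Submodule.subset_span ⟨e, rfl⟩)
  have hρN : ∀ x ∈ N, ρ x = x := by
    intro x hx
    obtain ⟨c, rfl⟩ := (Submodule.mem_span_range_iff_exists_fun Aᵐᵒᵖ).mp hx
    rw [map_sum]
    have : ∀ e, ρ (c e • u e) = c e • u e := by
      intro e
      rw [map_smul, hρ]
      simp [hψu, ite_smul, Finset.sum_ite_eq]
    simp_rw [this]
  have hND : N ⊓ (LinearMap.ker ρ ⊓ Rmax) = ⊥ := by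
    rw [eq_bot_iff]
    rintro x ⟨hxN, hxk, -⟩
    have h2 : ρ x = 0 := hxk
    have h3 : x = 0 := by rw [← hρN x hxN, h2]
    simp [h3]
  have hNsup : N ⊔ (LinearMap.ker ρ ⊓ Rmax) = Rmax := by
    apply le_antisymm (sup_le hNle inf_le_right)
    intro x hx
    have h1 : x - ρ x ∈ LinearMap.ker ρ ⊓ Rmax := by
      refine ⟨?_, Submodule.sub_mem _ hx (hNle (hρmem x))⟩
      show ρ (x - ρ x) = 0
      rw [map_sub, hρN (ρ x) (hρmem x), sub_self]
    have h2 : x = ρ x + (x - ρ x) := by abel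
    rw [h2]
    exact Submodule.add_mem_sup (hρmem x) h1
  haveI hC2free : Module.Free Aᵐᵒᵖ ↥(LinearMap.ker ρ ⊓ Rmax) :=
    hSFop (Fin k → A) inferInstance _
  have hNR : N = Rmax :=
    hRalg.2 N hQN ⟨hNle, LinearMap.ker ρ ⊓ Rmax, inf_le_right, hND, hNsup, hC2free⟩
  have hliu : LinearIndependent Aᵐᵒᵖ u := by
    apply Fintype.linearIndependent_iff.mpr
    intro g hg e
    have h2 : ψ e (∑ e', g e' • u e') = g e := by
      rw [map_sum]
      simp [hψu, mul_ite, Finset.sum_ite_eq]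
    rw [hg, map_zero] at h2
    exact h2.symm
  have bN : Module.Basis (Module.Free.ChooseBasisIndex A ↥(rowSpace Q)) Aᵐᵒᵖ
      ↥(Submodule.span Aᵐᵒᵖ (Set.range u)) := Module.Basis.span hliu
  calc Module.rank A ↥(rowSpace Q)
      = Cardinal.mk (Module.Free.ChooseBasisIndex A ↥(rowSpace Q)) := bR.mk_eq_rank''.symm
    _ = Module.rank Aᵐᵒᵖ ↥(Submodule.span Aᵐᵒᵖ (Set.range u)) := bN.mk_eq_rank''
    _ = Module.rank Aᵐᵒᵖ ↥Rmax := by rw [← hNdef, hNR]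

theorem rank_colSpace_eq_rank_rowClosure {A : Type u} [Ring A]
    [StrongRankCondition A] [StrongRankCondition Aᵐᵒᵖ]
    (hSF : HasSF.{u, u} A) (hSFop : HasSF.{u, u} Aᵐᵒᵖ)
    {k m : ℕ} (Q : Matrix (Fin k) (Fin m) A)
    (Rmax : Submodule Aᵐᵒᵖ (Fin k → A))
    (hRalg : IsAlgExt (colSpace Q) Rmax) (hRff : IsFreeFactor Rmax ⊤)
    (Lmax : Submodule A (Fin m → A))
    (hLalg : IsAlgExt (rowSpace Q) Lmax) (hLff : IsFreeFactor Lmax ⊤) :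
    Module.rank Aᵐᵒᵖ ↥(colSpace Q) = Module.rank A ↥Lmax ∧
    Module.rank A ↥(rowSpace Q) = Module.rank Aᵐᵒᵖ ↥Rmax := by
  exact ⟨core_left hSF hSFop Q Lmax hLalg hLff,
         core_right hSF hSFop Q Rmax hRalg hRff⟩
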